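/- (Correctness of the MILP model of the differential part) Let n be even, a > b, gcd(n, a−b) = 1, and let f : F₂ⁿ → F₂ⁿ be f(x) = (Sᵃ(x) ∧ Sᵇ(x)) ⊕ Sᶜ(x). Fix α, β ∈ {0,1}ⁿ with α ≠ 1ⁿ. Consider the constraint system in binary variables γ, varibits, doublebits, probits ∈ {0,1}ⁿ and integer variable pro consisting of, for each i (indices mod n): (i) varibits_i = α_{i+a} ∨ α_{i+b} encoded by {varibits_i − α_{i+a} ≥ 0, varibits_i − α_{i+b} ≥ 0, α_{i+a} + α_{i+b} − varibits_i ≥ 0}; (ii) doublebits_i = α_{i+b} ∧ ¬α_{i+a} ∧ α_{i+2a−b} encoded by {doublebits_i + α_{i+a} ≤ 1, doublebits_i − α_{i+b} ≤ 0, doublebits_i − α_{i+2a−b} ≤ 0, doublebits_i + α_{i+a} − α_{i+b} − α_{i+2a−b} ≥ −1}; (iii) β_i = γ_i ⊕ α_{i+c} encoded by {γ_i + α_{i+c} − β_i ≥ 0, γ_i − α_{i+c} + β_i ≥ 0, −γ_i + α_{i+c} + β_i ≥ 0, γ_i + α_{i+c} + β_i ≤ 2}; (iv) Σ_i α_i ≤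 n − 1; (v) {γ_i − varibits_i ≤ 0, γ_i − γ_{i+a−b} + doublebits_i ≤ 1, −γ_i + γ_{i+a−b} + doublebits_i ≤ 1}; (vi) probits_i = varibits_i ⊕ doublebits_i encoded by the analogous four XOR inequalities and pro = Σ_i probits_i. Then this system is feasible if and only if the differential probability Pr(α →f β) > 0, and in every feasible solution, Pr(α →f β) = 2^{−pro}. -/

import Mathlib

/-- Circular left shift by `t` bits: `(rotL n t x) i = x ((i + t) % n)`. -/
def rotL (n t : ℕ) (x : Fin n → Bool) : Fin n → Bool :=
  fun i => x ⟨(i.val + t) % n, Nat.mod_lt _ i.pos⟩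

/-- Interpret a binary variable as the integer `0` or `1`. -/
def b2i (x : Bool) : ℤ := if x then 1 else 0

/-- Differential probability `Pr(α →f β) = #{x : f(x) ⊕ f(x ⊕ α) = β} / 2^n`. -/
noncomputable def diffProb (n : ℕ) (f : (Fin n → Bool) → Fin n → Bool)
    (α β : Fin n → Bool) : ℚ :=
  ((Finset.univ.filter fun x : Fin n → Bool =>
      (fun i => xor (f x i) (f (fun j => xor (x j) (α j)) i)) = β).card : ℚ) / 2 ^ n

/-- The MILP constraint system of the differential part of a Simon-like round,
for fixed input/output differences `α`, `β`, in the binary variables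
`γ, varibits, doublebits, probits` and the integer variable `pro`. -/
def Sys (n a b c : ℕ) (α β γ varibits doublebits probits : Fin n → Bool) (pro : ℤ) : Prop :=
  (∀ i : Fin n,
    -- (i) varibits_i = α_{i+a} ∨ α_{i+b}
    b2i (varibits i) - b2i (rotL n a α i) ≥ 0 ∧
    b2i (varibits i) - b2i (rotL n b α i) ≥ 0 ∧
    b2i (rotL n a α i) + b2i (rotL n b α i) - b2i (varibits i) ≥ 0 ∧
    -- (ii) doublebits_i = α_{i+b} ∧ ¬α_{i+a} ∧ α_{i+2a−b}
    b2i (doublebits i) + b2i (rotL n a α i) ≤ 1 ∧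
    b2i (doublebits i) - b2i (rotL n b α i) ≤ 0 ∧
    b2i (doublebits i) - b2i (rotL n (2 * a - b) α i) ≤ 0 ∧
    b2i (doublebits i) + b2i (rotL n a α i) - b2i (rotL n b α i)
      - b2i (rotL n (2 * a - b) α i) ≥ -1 ∧
    -- (iii) β_i = γ_i ⊕ α_{i+c}
    b2i (γ i) + b2i (rotL n c α i) - b2i (β i) ≥ 0 ∧
    b2i (γ i) - b2i (rotL n c α i) + b2i (β i) ≥ 0 ∧
    -b2i (γ i) + b2i (rotL n c α i) + b2i (β i) ≥ 0 ∧
    b2i (γ i) + b2i (rotL n c α i) + b2i (β i) ≤ 2 ∧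
    -- (v) validity conditions
    b2i (γ i) - b2i (varibits i) ≤ 0 ∧
    b2i (γ i) - b2i (rotL n (a - b) γ i) + b2i (doublebits i) ≤ 1 ∧
    -b2i (γ i) + b2i (rotL n (a - b) γ i) + b2i (doublebits i) ≤ 1 ∧
    -- (vi) probits_i = varibits_i ⊕ doublebits_i
    b2i (varibits i) + b2i (doublebits i) - b2i (probits i) ≥ 0 ∧
    b2i (varibits i) - b2i (doublebits i) + b2i (probits i) ≥ 0 ∧
    -b2i (varibits i) + b2i (doublebits i) + b2i (probits i) ≥ 0 ∧
    b2i (varibits i) + b2i (doublebits i) + b2i (probits i) ≤ 2) ∧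
  -- (iv) Σ_i α_i ≤ n − 1
  (∑ i : Fin n, b2i (α i)) ≤ (n : ℤ) - 1 ∧
  -- (vi) pro = Σ_i probits_i
  pro = ∑ i : Fin n, b2i (probits i)

open Fin.CommRing

namespace MilpAux
-- extraction lemmas
lemma ext_or {v x y : Bool} (h1 : b2i v - b2i x ≥ 0) (h2 : b2i v - b2i y ≥ 0)
    (h3 : b2i x + b2i y - b2i v ≥ 0) : v = (x || y) := by
  revert h1 h2 h3; cases v <;> cases x <;> cases y <;> decide
lemma ext_dbl {v x y z : Bool} (h1 : b2i v + b2i x ≤ 1) (h2 : b2i v - b2i y ≤ 0)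
    (h3 : b2i v - b2i z ≤ 0) (h4 : b2i v + b2i x - b2i y - b2i z ≥ -1) :
    v = (y && !x && z) := by
  revert h1 h2 h3 h4; cases v <;> cases x <;> cases y <;> cases z <;> decide
lemma ext_gamma {g ac bi : Bool} (h1 : b2i g + b2i ac - b2i bi ≥ 0)
    (h2 : b2i g - b2i ac + b2i bi ≥ 0) (h3 : -b2i g + b2i ac + b2i bi ≥ 0)
    (h4 : b2i g + b2i ac + b2i bi ≤ 2) : g = xor bi ac := by
  revert h1 h2 h3 h4; cases g <;> cases ac <;> cases bi <;> decide
lemma ext_xorv {v x p : Bool} (h1 : b2i v + b2i x - b2i p ≥ 0)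
    (h2 : b2i v - b2i x + b2i p ≥ 0) (h3 : -b2i v + b2i x + b2i p ≥ 0)
    (h4 : b2i v + b2i x + b2i p ≤ 2) : p = xor v x := by
  revert h1 h2 h3 h4; cases v <;> cases x <;> cases p <;> decide
lemma ext_le {x y : Bool} (h : b2i x - b2i y ≤ 0) : x = true → y = true := by
  revert h; cases x <;> cases y <;> decide
lemma ext_pair {g g' d : Bool} (h1 : b2i g - b2i g' + b2i d ≤ 1)
    (h2 : -b2i g + b2i g' + b2i d ≤ 1) : d = true → g = g' := by
  revert h1 h2; cases g <;> cases g' <;> cases d <;> decide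
-- construction lemmas
lemma mk_or (x y : Bool) : b2i (x||y) - b2i x ≥ 0 ∧ b2i (x||y) - b2i y ≥ 0 ∧
    b2i x + b2i y - b2i (x||y) ≥ 0 := by cases x <;> cases y <;> decide
lemma mk_dbl (x y z : Bool) : b2i (y && !x && z) + b2i x ≤ 1 ∧
    b2i (y && !x && z) - b2i y ≤ 0 ∧ b2i (y && !x && z) - b2i z ≤ 0 ∧
    b2i (y && !x && z) + b2i x - b2i y - b2i z ≥ -1 := by
  cases x <;> cases y <;> cases z <;> decide
lemma mk_gamma (bi ac : Bool) : b2i (xor bi ac) + b2i ac - b2i bi ≥ 0 ∧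
    b2i (xor bi ac) - b2i ac + b2i bi ≥ 0 ∧ -b2i (xor bi ac) + b2i ac + b2i bi ≥ 0 ∧
    b2i (xor bi ac) + b2i ac + b2i bi ≤ 2 := by cases bi <;> cases ac <;> decide
lemma mk_xorv (v x : Bool) : b2i v + b2i x - b2i (xor v x) ≥ 0 ∧
    b2i v - b2i x + b2i (xor v x) ≥ 0 ∧ -b2i v + b2i x + b2i (xor v x) ≥ 0 ∧
    b2i v + b2i x + b2i (xor v x) ≤ 2 := by cases v <;> cases x <;> decide
lemma mk_le {x y : Bool} (h : x = true → y = true) : b2i x - b2i y ≤ 0 := by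
  revert h; cases x <;> cases y <;> decide
lemma mk_pair {g g' d : Bool} (h : d = true → g = g') :
    b2i g - b2i g' + b2i d ≤ 1 ∧ -b2i g + b2i g' + b2i d ≤ 1 := by
  revert h; cases g <;> cases g' <;> cases d <;> decide
lemma b2i_toNat (x : Bool) : b2i x = (x.toNat : ℤ) := by cases x <;> rfl
lemma bool_main (xa xb xc aa ab ac bi : Bool) :
    (xor (xor (xa && xb) xc) (xor ((xor xa aa) && (xor xb ab)) (xor xc ac)) = bi)
      ↔ (xor (xor (ab && xa) (aa && xb)) (aa && ab) = xor bi ac) := by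
  revert xa xb xc aa ab ac bi; decide
-- rotL lemma
lemma rotL_eq {m : ℕ} (t : ℕ) (x : Fin (m+1) → Bool) (i : Fin (m+1)) :
    rotL (m+1) t x i = x (i + (t : Fin (m+1))) := by
  show x _ = x _
  congr 1
  apply Fin.ext
  show (i.val + t) % (m+1) = (i + (t : Fin (m+1))).val
  rw [Fin.val_add, Fin.val_natCast, Nat.add_mod i.val t, Nat.mod_eq_of_lt i.isLt]

variable {m : ℕ}
def eqn (A Γ u : Fin (m+1) → Bool) : Prop :=
  ∀ k, xor (xor (A k && u (k+1)) (A (k+1) && u k)) (A (k+1) && A k) = Γ k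
def cond (A Γ : Fin (m+1) → Bool) : Prop :=
  (∀ k, Γ k = true → (A k || A (k+1)) = true) ∧
  (∀ k, A k = true → A (k+1) = false → A (k+2) = true → Γ k = Γ (k+1))
def probA (A : Fin (m+1) → Bool) (k : Fin (m+1)) : Bool :=
  xor (A (k+1) || A k) (A k && !A (k+1) && A (k+2))
def freeb (A : Fin (m+1) → Bool) (k : Fin (m+1)) : Bool :=
  (A k && !A (k-1)) || (!A k && !A (k-1) && !A (k+1))
lemma cast_succ_fin (j : ℕ) : ((j+1 : ℕ) : Fin (m+1)) = (j : Fin (m+1)) + 1 := by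
  push_cast; ring
def w (A Γ c : Fin (m+1) → Bool) (z : Fin (m+1)) : ℕ → Bool
  | 0 => if A (z+1) then Γ z else if A (z-1) then Γ (z-1) else c z
  | (j+1) =>
    if A (z + (j : Fin (m+1)) + 1) then
      (if A (z + (j : Fin (m+1))) then
          !(xor (w A Γ c z j) (Γ (z + (j : Fin (m+1)))))
        else c (z + (j : Fin (m+1)) + 1))
    else
      (if A (z + (j : Fin (m+1)) + 2) then Γ (z + (j : Fin (m+1)) + 1)
       else if A (z + (j : Fin (m+1))) then Γ (z + (j : Fin (m+1)))
       else c (z + (j : Fin (m+1)) + 1))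
def Phi (A Γ c : Fin (m+1) → Bool) (z : Fin (m+1)) : Fin (m+1) → Bool :=
  fun k => w A Γ c z (k - z).val

variable {A Γ c u : Fin (m+1) → Bool} {z : Fin (m+1)}

/-- value of `w` at a position whose `A`-bit is false and whose successor bit is true -/
lemma w_ft (hz : A z = false) (j : ℕ) (k : Fin (m+1)) (hjk : z + (j : Fin (m+1)) = k)
    (h0 : A k = false) (h1 : A (k+1) = true) : w A Γ c z j = Γ k := by
  cases j with
  | zero =>
    have hzk : z = k := by simpa using hjk
    subst hzk
    simp [w, h1]
  | succ j' =>
    have hj' : z + (j' : Fin (m+1)) = k - 1 := by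
      rw [cast_succ_fin, ← add_assoc] at hjk
      rw [← hjk]; ring
    have e1 : z + (j' : Fin (m+1)) + 1 = k := by rw [hj']; ring
    have e2 : z + (j' : Fin (m+1)) + 2 = k + 1 := by rw [hj']; ring
    simp only [w, e1, e2, h0, h1]
    simp

lemma eqn_Phi (hz : A z = false) (hc : cond A Γ) : eqn A Γ (Phi A Γ c z) := by
  intro k
  have hk : z + (((k - z).val : ℕ) : Fin (m+1)) = k := by
    rw [Fin.cast_val_eq_self]; ring
  rcases Nat.lt_or_ge (k - z).val m with hlt | hge
  · set j := (k - z).val with hj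
    have hsucc : (k + 1 - z) = (k - z) + 1 := by ring
    have hsv : (k + 1 - z).val = j + 1 := by
      rw [hsucc, Fin.val_add_one_of_lt]
      rw [Fin.lt_iff_val_lt_val, Fin.val_last]; exact hlt
    have hΦk : Phi A Γ c z k = w A Γ c z j := rfl
    have hΦk1 : Phi A Γ c z (k+1) = w A Γ c z (j+1) := by
      show w A Γ c z (k + 1 - z).val = _
      rw [hsv]
    have e0 : z + (j : Fin (m+1)) = k := hk
    have e1 : z + (j : Fin (m+1)) + 1 = k + 1 := by rw [e0]
    have e2 : z + (j : Fin (m+1)) + 2 = k + 2 := by rw [e0]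
    rw [hΦk, hΦk1]
    cases hA0 : A k <;> cases hA1 : A (k+1)
    · -- ff ff : trivial equation, Γ k must be false
      cases hΓ : Γ k with
      | false => simp [hA0, hA1]
      | true => have := hc.1 k hΓ; rw [hA0, hA1] at this; simp at this
    · -- ff tt : equation pins u k; w j = Γ k
      rw [w_ft hz j k e0 hA0 hA1]
      simp [hA0, hA1]
    · -- tt ff : equation pins u (k+1); compute w (j+1)
      simp only [w, e0, e1, e2, hA0, hA1]
      cases hA2 : A (k+2)
      · simp [hA0, hA1]
      · have := hc.2 k hA0 hA1 hA2
        simp [hA0, hA1, ← this]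
    · -- tt tt : chain step
      simp only [w, e0, e1, e2, hA0, hA1]
      simp only [hA0, hA1, if_true]
      cases hw : w A Γ c z j <;> cases hΓ : Γ k <;> simp [hA0, hA1, hw, hΓ]
  · -- j = m : wraparound, k + 1 = z
    have hjm : (k - z).val = m := le_antisymm (Nat.lt_succ_iff.mp (k - z).isLt) hge
    have hk1 : k + 1 = z := by
      have : k - z = Fin.last m := by
        apply Fin.ext; rw [hjm]; rfl
      have h2 : k = z + Fin.last m := by rw [← this]; ring
      rw [h2]
      have : Fin.last m + 1 = 0 := by
        apply Fin.ext
        simp [Fin.val_add, Fin.val_last]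
      rw [add_assoc, this, add_zero]
    have hA1 : A (k+1) = false := by rw [hk1]; exact hz
    have hΦk1 : Phi A Γ c z (k+1) = w A Γ c z 0 := by
      show w A Γ c z (k + 1 - z).val = _
      rw [hk1]; simp
    rw [hΦk1]
    cases hA0 : A k
    · cases hΓ : Γ k with
      | false => simp [hA0, hA1]
      | true => have := hc.1 k hΓ; rw [hA0, hA1] at this; simp at this
    · -- A k = true: equation is w 0 = Γ k, with k = z - 1
      have hzk : z - 1 = k := by rw [← hk1]; ring
      have hz1 : z + 1 = k + 2 := by rw [← hk1]; ring
      simp only [w, hzk, hA0, hz1]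
      cases hA2 : A (k+2)
      · simp [hA0, hA1]
      · have := hc.2 k hA0 hA1 hA2
        rw [hk1] at this
        simp [hA0, hA1, ← this]
lemma bool_chain (x y g : Bool) (h : xor (xor x y) true = g) : x = !(xor y g) := by
  revert h; cases x <;> cases y <;> cases g <;> decide

lemma w_eq_sol (hu : eqn A Γ u) (hz : A z = false)
    (hc : ∀ k, freeb A k = true → c k = u k) : ∀ j, w A Γ c z j = u (z + (j : Fin (m+1))) := by
  intro j
  induction j with
  | zero =>
    simp only [Nat.cast_zero, add_zero]
    cases hA1 : A (z+1)
    · cases hA1' : A (z-1)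
      · have hfree : freeb A z = true := by simp [freeb, hz, hA1, hA1']
        simp [w, hA1, hA1', hc z hfree]
      · have e : z - 1 + 1 = z := by ring
        have hp := hu (z-1)
        rw [e, hA1', hz] at hp
        simp at hp
        simp [w, hA1, hA1', hp]
    · have hp := hu z
      rw [hz, hA1] at hp
      simp at hp
      simp [w, hA1, hp]
  | succ j ih =>
    have ej : ((j+1 : ℕ) : Fin (m+1)) = (j : Fin (m+1)) + 1 := cast_succ_fin j
    rw [ej, ← add_assoc]
    set p := z + (j : Fin (m+1)) with hp0
    cases hA : A (p + 1)
    · cases hA2 : A (p + 2)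
      · cases hA' : A p
        · have hfree : freeb A (p+1) = true := by
            have e : p + 1 - 1 = p := by ring
            have e2 : p + 1 + 1 = p + 2 := by ring
            simp [freeb, e, e2, hA, hA2, hA']
          simp [w, hA, hA2, hA', hc _ hfree, ← hp0]
        · have hpe := hu p
          rw [hA', hA] at hpe
          simp at hpe
          simp [w, hA, hA2, hA', hpe, ← hp0]
      · have hpe := hu (p+1)
        have e2 : p + 1 + 1 = p + 2 := by ring
        rw [e2, hA, hA2] at hpe
        simp at hpe
        simp [w, hA, hA2, hpe, ← hp0]
    · cases hA' : A p
      · have hfree : freeb A (p+1) = true := by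
          have e : p + 1 - 1 = p := by ring
          simp [freeb, e, hA, hA']
        simp [w, hA, hA', hc _ hfree, ← hp0]
      · have hpe := hu p
        rw [hA', hA] at hpe
        simp only [Bool.true_and] at hpe
        have := bool_chain _ _ _ hpe
        rw [← ih] at this
        simp [w, hA, hA', this, ← hp0]

lemma restrict_Phi (hz : A z = false) (hf : freeb A k = true) :
    Phi A Γ c z k = c k := by
  have hk : z + (((k - z).val : ℕ) : Fin (m+1)) = k := by
    rw [Fin.cast_val_eq_self]; ring
  show w A Γ c z (k - z).val = c k
  cases hj : (k - z).val with
  | zero =>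
    have hzk : z = k := by rw [← hk, hj]; simp
    subst hzk
    rw [freeb, hz] at hf
    simp at hf
    simp [w, hf.1, hf.2]
  | succ j =>
    rw [hj] at hk
    rw [cast_succ_fin, ← add_assoc] at hk
    have e0 : z + (j : Fin (m+1)) = k - 1 := by rw [← hk]; ring
    have e1 : z + (j : Fin (m+1)) + 1 = k := by rw [e0]; ring
    have e2 : z + (j : Fin (m+1)) + 2 = k + 1 := by rw [e0]; ring
    rw [freeb] at hf
    have e3 : k - 1 + 2 = k + 1 := by ring
    have e4 : k - 1 + 1 = k := by ring
    cases hAk : A k <;> rw [hAk] at hf <;> simp at hf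
    · simp [w, e0, e1, e2, e3, e4, hAk, hf.1, hf.2]
    · simp [w, e0, e1, e2, e3, e4, hAk, hf]
lemma count_pointwise (A : Fin (m+1) → Bool) (k : Fin (m+1)) :
    (freeb A (k+1)).toNat + (probA A k).toNat + (!A (k+1) && A (k+2)).toNat
      = 1 + (!A k && A (k+1)).toNat := by
  have e : k + 1 - 1 = k := by ring
  have e2 : k + 1 + 1 = k + 2 := by ring
  rw [freeb, probA, e, e2]
  cases A k <;> cases A (k+1) <;> cases A (k+2) <;> rfl

lemma sum_free_prob (A : Fin (m+1) → Bool) :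
    (∑ k, (freeb A k).toNat) + (∑ k, (probA A k).toNat) = m + 1 := by
  have h1 : ∑ k, (freeb A (k+1)).toNat = ∑ k, (freeb A k).toNat :=
    Fintype.sum_equiv (Equiv.addRight 1) _ _ (fun k => rfl)
  have h2 : ∑ k, (!A (k+1) && A (k+2)).toNat = ∑ k, (!A k && A (k+1)).toNat :=
    Fintype.sum_equiv (Equiv.addRight 1) _ _
      (fun k => by show _ = (!A (k+1) && A (k+1+1)).toNat; rw [show k+1+1 = k+2 by ring])
  have h3 := Finset.sum_congr rfl (fun k (_ : k ∈ Finset.univ) => count_pointwise A k)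
  rw [Finset.sum_add_distrib, Finset.sum_add_distrib, Finset.sum_add_distrib] at h3
  have h4 : ∑ _k : Fin (m+1), 1 = m + 1 := by simp
  omega

lemma card_free (A : Fin (m+1) → Bool) :
    Fintype.card {k // freeb A k = true} = ∑ k, (freeb A k).toNat := by
  rw [Fintype.card_subtype, Finset.card_filter]
  exact Finset.sum_congr rfl (fun k _ => by cases freeb A k <;> rfl)

lemma prob_le (A : Fin (m+1) → Bool) : ∑ k, (probA A k).toNat ≤ m + 1 := by
  have := sum_free_prob A; omega

instance (A Γ : Fin (m+1) → Bool) : DecidablePred (eqn A Γ) :=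
  fun u => inferInstanceAs (Decidable (∀ k, _ = _))

lemma Phi_eq_sol (hu : eqn A Γ u) (hz : A z = false)
    (hc : ∀ k, freeb A k = true → c k = u k) : Phi A Γ c z = u := by
  funext k
  show w A Γ c z (k - z).val = u k
  rw [w_eq_sol hu hz hc, Fin.cast_val_eq_self]
  congr 1; ring

noncomputable def solEquiv (hz : A z = false) (hc : cond A Γ) :
    {u : Fin (m+1) → Bool // eqn A Γ u} ≃ ({k : Fin (m+1) // freeb A k = true} → Bool) where
  toFun u k := u.1 k.1
  invFun cf := ⟨Phi A Γ (fun k => if h : freeb A k = true then cf ⟨k, h⟩ else false) z,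
    eqn_Phi hz hc⟩
  left_inv u := Subtype.ext (Phi_eq_sol u.2 hz (fun k hk => by simp [hk]))
  right_inv cf := by
    funext k
    show Phi A Γ _ z k.1 = cf k
    rw [restrict_Phi hz k.2]
    simp [k.2]

lemma card_sol (hz : A z = false) (hc : cond A Γ) :
    Fintype.card {u : Fin (m+1) → Bool // eqn A Γ u}
      = 2 ^ (m + 1 - ∑ k, (probA A k).toNat) := by
  rw [Fintype.card_congr (solEquiv hz hc), Fintype.card_fun, card_free, Fintype.card_bool]
  congr 1
  have := sum_free_prob A
  omega

lemma exists_iff (hz : A z = false) : (∃ u, eqn A Γ u) ↔ cond A Γ := by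
  constructor
  · rintro ⟨u, hu⟩
    constructor
    · intro k hΓ
      cases hA0 : A k
      · cases hA1 : A (k+1)
        · have hp := hu k; rw [hA0, hA1, hΓ] at hp; simp at hp
        · simp [hA0, hA1]
      · simp [hA0]
    · intro k h0 h1 h2
      have e : k + 1 + 1 = k + 2 := by ring
      have hp := hu k; rw [h0, h1] at hp; simp at hp
      have hq := hu (k+1); rw [e, h1, h2] at hq; simp at hq
      rw [← hp, ← hq]
  · intro hc
    exact ⟨Phi A Γ (fun _ => false) z, eqn_Phi hz hc⟩

end MilpAux

theorem milp_diff_model_correct (n a b c : ℕ) (hn : 0 < n) (hneven : Even n)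
    (hab : a > b) (hgcd : Nat.gcd n (a - b) = 1)
    (f : (Fin n → Bool) → Fin n → Bool)
    (hf : ∀ x, f x = fun i => xor (rotL n a x i && rotL n b x i) (rotL n c x i))
    (α β : Fin n → Bool) (hα : α ≠ fun _ => true) :
    ((∃ γ varibits doublebits probits pro,
        Sys n a b c α β γ varibits doublebits probits pro)
      ↔ 0 < diffProb n f α β) ∧
    (∀ γ varibits doublebits probits pro,
        Sys n a b c α β γ varibits doublebits probits pro →
          diffProb n f α β = (2 : ℚ) ^ (-pro)) := by
  classical
  open MilpAux in
  obtain ⟨m, rfl⟩ : ∃ m, n = m + 1 := ⟨n - 1, by omega⟩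
  set e := a - b with he
  have hbe : a = b + e := by omega
  have h2ab : 2 * a - b = b + 2 * e := by omega
  have hcop : Nat.Coprime e (m+1) := Nat.coprime_comm.mp hgcd
  have hunit : IsUnit (e : Fin (m+1)) := by
    have h2 := (ZMod.unitOfCoprime (n := m+1) e hcop).isUnit
    have h3 : ((ZMod.unitOfCoprime (n := m+1) e hcop : ZMod (m+1))) = ((e : ZMod (m+1))) :=
      ZMod.coe_unitOfCoprime e hcop
    rw [h3] at h2; exact h2
  obtain ⟨uu, huu⟩ := hunit
  set ρ : Fin (m+1) ≃ Fin (m+1) := Units.mulRight uu with hρ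
  set π : Fin (m+1) ≃ Fin (m+1) := ρ.trans (Equiv.addLeft (b : Fin (m+1))) with hπ
  have hρk : ∀ k, ρ k = k * (e : Fin (m+1)) := fun k => by
    simp [hρ, ← huu, Units.mulRight]
  have hπk : ∀ k, π k = (b : Fin (m+1)) + k * (e : Fin (m+1)) := fun k => by
    simp [hπ, hρk k]
  set γ0 : Fin (m+1) → Bool := fun i => xor (β i) (rotL (m+1) c α i) with hγ0
  set varb : Fin (m+1) → Bool := fun i => (rotL (m+1) a α i || rotL (m+1) b α i) with hvarb
  set dbl : Fin (m+1) → Bool :=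
    fun i => (rotL (m+1) b α i && !rotL (m+1) a α i && rotL (m+1) (2*a-b) α i) with hdbl
  set prb : Fin (m+1) → Bool := fun i => xor (varb i) (dbl i) with hprb
  set A : Fin (m+1) → Bool := fun k => α (π k) with hA
  set Γ : Fin (m+1) → Bool := fun k => γ0 (ρ k) with hΓ
  have key_a : ∀ (x : Fin (m+1) → Bool) k, rotL (m+1) a x (ρ k) = x (π (k+1)) := by
    intro x k; rw [rotL_eq]; congr 1; rw [hρk, hπk, hbe]; push_cast; ring
  have key_b : ∀ (x : Fin (m+1) → Bool) k, rotL (m+1) b x (ρ k) = x (π k) := by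
    intro x k; rw [rotL_eq]; congr 1; rw [hρk, hπk]; ring
  have key_2 : ∀ k, rotL (m+1) (2*a-b) α (ρ k) = A (k+2) := by
    intro k; rw [rotL_eq]; simp only [hA]; congr 1; rw [hρk, hπk, h2ab]; push_cast; ring
  have key_e : ∀ k, (ρ k) + ((e : ℕ) : Fin (m+1)) = ρ (k+1) := by
    intro k; rw [hρk, hρk]; push_cast; ring
  have hvarbρ : ∀ k, varb (ρ k) = (A (k+1) || A k) := fun k => by
    simp only [hvarb]; rw [key_a, key_b]
  have hdblρ : ∀ k, dbl (ρ k) = (A k && !A (k+1) && A (k+2)) := fun k => by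
    simp only [hdbl]; rw [key_a, key_b, key_2]
  have hprbρ : ∀ k, prb (ρ k) = probA A k := fun k => by
    simp only [hprb, probA]; rw [hvarbρ, hdblρ]
  set P : (Fin (m+1) → Bool) → Prop :=
    fun x => ((fun i => xor (f x i) (f (fun j => xor (x j) (α j)) i)) = β) with hP
  have hpoint : ∀ (x : Fin (m+1) → Bool) i,
      (xor (f x i) (f (fun j => xor (x j) (α j)) i) = β i) ↔
      (xor (xor (rotL (m+1) b α i && rotL (m+1) a x i)
          (rotL (m+1) a α i && rotL (m+1) b x i))
        (rotL (m+1) a α i && rotL (m+1) b α i) = γ0 i) := by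
    intro x i
    simp only [hγ0, hf]
    exact bool_main (rotL (m+1) a x i) (rotL (m+1) b x i) (rotL (m+1) c x i)
      (rotL (m+1) a α i) (rotL (m+1) b α i) (rotL (m+1) c α i) (β i)
  have hsol : ∀ x, P x ↔ eqn A Γ (fun k => x (π k)) := by
    intro x
    simp only [hP, funext_iff, eqn]
    constructor
    · intro h k
      have h2 := (hpoint x (ρ k)).mp (h (ρ k))
      rw [key_a, key_b, key_a, key_b] at h2
      exact h2
    · intro h i
      obtain ⟨k, rfl⟩ : ∃ k, ρ k = i := ⟨ρ.symm i, ρ.apply_symm_apply i⟩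
      apply (hpoint x (ρ k)).mpr
      rw [key_a, key_b, key_a, key_b]
      exact h k
  have hzero0 : ∃ i, α i = false := by
    by_contra hno
    push_neg at hno
    apply hα
    funext i
    have := hno i
    revert this; cases α i <;> simp
  obtain ⟨i0, hi0⟩ := hzero0
  have hzero : ∃ z, A z = false :=
    ⟨π.symm i0, by simp only [hA]; rw [Equiv.apply_symm_apply]; exact hi0⟩
  obtain ⟨z, hz⟩ := hzero
  set wt : ℕ := ∑ k, (probA A k).toNat with hwt
  have hwtprb : (∑ i, (prb i).toNat) = wt := by
    rw [hwt]
    exact (Fintype.sum_equiv ρ _ _ (fun k => by rw [hprbρ k])).symm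
  have hwtle : wt ≤ m + 1 := hwt ▸ prob_le A
  have hcond_of : (∀ i, γ0 i = true → varb i = true) →
      (∀ i, dbl i = true → γ0 i = γ0 (i + ((e : ℕ) : Fin (m+1)))) → cond A Γ := by
    intro h1 h2
    constructor
    · intro k hΓk
      have hv := h1 (ρ k) (by simpa only [hΓ] using hΓk)
      rw [hvarbρ] at hv
      rw [Bool.or_comm]; exact hv
    · intro k ha0 ha1 ha2
      have hd : dbl (ρ k) = true := by rw [hdblρ, ha0, ha1, ha2]; rfl
      have h3 := h2 (ρ k) hd
      rw [key_e] at h3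
      simp only [hΓ]; exact h3
  have hcond_to : cond A Γ → (∀ i, γ0 i = true → varb i = true) ∧
      (∀ i, dbl i = true → γ0 i = γ0 (i + ((e : ℕ) : Fin (m+1)))) := by
    intro hc
    constructor
    · intro i hg
      obtain ⟨k, rfl⟩ : ∃ k, ρ k = i := ⟨ρ.symm i, ρ.apply_symm_apply i⟩
      have hv := hc.1 k (by simpa only [hΓ] using hg)
      rw [hvarbρ, Bool.or_comm]; exact hv
    · intro i hd
      obtain ⟨k, rfl⟩ : ∃ k, ρ k = i := ⟨ρ.symm i, ρ.apply_symm_apply i⟩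
      rw [hdblρ] at hd
      simp only [Bool.and_eq_true, Bool.not_eq_true'] at hd
      have h3 := hc.2 k hd.1.1 hd.1.2 hd.2
      rw [key_e]
      simpa only [hΓ] using h3
  have hdiff : diffProb (m+1) f α β = ((Nat.card {x // P x}) : ℚ) / 2 ^ (m+1) := by
    unfold diffProb
    rw [Nat.card_eq_fintype_card, Fintype.card_subtype]
  have hcard : ∀ (_ : cond A Γ), (Nat.card {x // P x}) = 2 ^ (m + 1 - wt) := by
    intro hc
    have E : {x : Fin (m+1) → Bool // P x} ≃ {u : Fin (m+1) → Bool // eqn A Γ u} :=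
      Equiv.subtypeEquiv (Equiv.arrowCongr π.symm (Equiv.refl Bool)) (fun x => hsol x)
    rw [Nat.card_congr E, Nat.card_eq_fintype_card, card_sol hz hc, ← hwt]
  have main2 : ∀ γv varv dblv prbv pro,
      Sys (m+1) a b c α β γv varv dblv prbv pro →
        diffProb (m+1) f α β = (2 : ℚ) ^ (-pro) := by
    intro γv varv dblv prbv pro hS
    obtain ⟨hpt, hsum, hpro⟩ := hS
    have hvv : ∀ i, varv i = varb i := fun i => by
      obtain ⟨i1,i2,i3,_⟩ := hpt i
      rw [ext_or i1 i2 i3]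
    have hdd : ∀ i, dblv i = dbl i := fun i => by
      obtain ⟨_,_,_,i4,i5,i6,i7,_⟩ := hpt i
      rw [ext_dbl i4 i5 i6 i7]
    have hgg : ∀ i, γv i = γ0 i := fun i => by
      obtain ⟨_,_,_,_,_,_,_,i8,i9,i10,i11,_⟩ := hpt i
      rw [ext_gamma i8 i9 i10 i11]
    have hppv : ∀ i, prbv i = prb i := fun i => by
      obtain ⟨_,_,_,_,_,_,_,_,_,_,_,_,_,_,i15,i16,i17,i18⟩ := hpt i
      rw [ext_xorv i15 i16 i17 i18, hvv i, hdd i]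
    have hC1 : ∀ i, γ0 i = true → varb i = true := fun i => by
      obtain ⟨_,_,_,_,_,_,_,_,_,_,_,i12,_⟩ := hpt i
      have h := ext_le i12
      rw [hgg i, hvv i] at h
      exact h
    have hC2 : ∀ i, dbl i = true → γ0 i = γ0 (i + ((e : ℕ) : Fin (m+1))) := fun i => by
      obtain ⟨_,_,_,_,_,_,_,_,_,_,_,_,i13,i14,_⟩ := hpt i
      have h := ext_pair i13 i14
      rw [hdd i, hgg i] at h
      rw [← he, rotL_eq, hgg (i + ((e : ℕ) : Fin (m+1)))] at h
      exact h
    have hc := hcond_of hC1 hC2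
    have hproval : pro = (wt : ℤ) := by
      rw [hpro]
      rw [Finset.sum_congr rfl (fun i _ => by rw [hppv i, b2i_toNat] :
        ∀ i ∈ Finset.univ, b2i (prbv i) = ((prb i).toNat : ℤ))]
      rw [← Nat.cast_sum, hwtprb]
    rw [hproval, hdiff, hcard hc]
    push_cast
    rw [zpow_neg, zpow_natCast, inv_eq_one_div,
      div_eq_div_iff (by positivity) (by positivity), one_mul, ← pow_add]
    congr 1
    omega
  refine ⟨⟨?_, ?_⟩, main2⟩
  · rintro ⟨γv, varv, dblv, prbv, pro, hS⟩
    rw [main2 _ _ _ _ _ hS]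
    exact zpow_pos (by norm_num) _
  · intro hpos
    have hne : Nonempty {x // P x} := by
      by_contra hempty
      rw [not_nonempty_iff] at hempty
      rw [hdiff, Nat.card_of_isEmpty] at hpos
      norm_num at hpos
    obtain ⟨x, hx⟩ := hne
    have hc : cond A Γ := (exists_iff hz).mp ⟨fun k => x (π k), (hsol x).mp hx⟩
    obtain ⟨hC1, hC2⟩ := hcond_to hc
    refine ⟨γ0, varb, dbl, prb, ∑ i, b2i (prb i), ?_, ?_, rfl⟩
    · intro i
      refine ⟨?_, ?_, ?_, ?_, ?_, ?_, ?_, ?_, ?_, ?_, ?_, ?_, ?_, ?_, ?_, ?_, ?_, ?_⟩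
      · exact (mk_or (rotL (m+1) a α i) (rotL (m+1) b α i)).1
      · exact (mk_or (rotL (m+1) a α i) (rotL (m+1) b α i)).2.1
      · exact (mk_or (rotL (m+1) a α i) (rotL (m+1) b α i)).2.2
      · exact (mk_dbl (rotL (m+1) a α i) (rotL (m+1) b α i) (rotL (m+1) (2*a-b) α i)).1
      · exact (mk_dbl (rotL (m+1) a α i) (rotL (m+1) b α i) (rotL (m+1) (2*a-b) α i)).2.1
      · exact (mk_dbl (rotL (m+1) a α i) (rotL (m+1) b α i) (rotL (m+1) (2*a-b) α i)).2.2.1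
      · exact (mk_dbl (rotL (m+1) a α i) (rotL (m+1) b α i) (rotL (m+1) (2*a-b) α i)).2.2.2
      · exact (mk_gamma (β i) (rotL (m+1) c α i)).1
      · exact (mk_gamma (β i) (rotL (m+1) c α i)).2.1
      · exact (mk_gamma (β i) (rotL (m+1) c α i)).2.2.1
      · exact (mk_gamma (β i) (rotL (m+1) c α i)).2.2.2
      · exact mk_le (hC1 i)
      · refine (mk_pair (g' := rotL (m+1) (a-b) γ0 i) ?_).1
        rw [← he, rotL_eq]; exact hC2 i
      · refine (mk_pair (g' := rotL (m+1) (a-b) γ0 i) ?_).2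
        rw [← he, rotL_eq]; exact hC2 i
      · exact (mk_xorv (varb i) (dbl i)).1
      · exact (mk_xorv (varb i) (dbl i)).2.1
      · exact (mk_xorv (varb i) (dbl i)).2.2.1
      · exact (mk_xorv (varb i) (dbl i)).2.2.2
    · have hlt : (∑ i, b2i (α i)) < ∑ _i : Fin (m+1), (1:ℤ) := by
        apply Finset.sum_lt_sum (fun i _ => by cases α i <;> simp [b2i])
        exact ⟨i0, Finset.mem_univ _, by rw [hi0]; simp [b2i]⟩
      rw [Finset.sum_const, Finset.card_univ, Fintype.card_fin, nsmul_eq_mul, mul_one] at hlt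
      push_cast at hlt ⊢
      omega
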